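/- Let m ≥ 1 and l be natural numbers, let ν > 0 be real, and let L_l^{m−1} denote the generalized Laguerre polynomial of degree l and order m−1. Then ∫_{ℝ^{2m}} e^{−ν‖X‖²/4} · L_l^{m−1}(ν‖X‖²/2) dX = (−1)^l · (4π/ν)^m · binom(l+m−1, l). -/

import Mathlib

open MeasureTheory Finset Real Set

lemma oneD_integral (k : ℕ) {b : ℝ} (hb : 0 < b) :
    ∫ r in Ioi (0:ℝ), r^(2*k+1) * Real.exp (-b * r^2)
      = (k.factorial : ℝ) / (2 * b^(k+1)) := by
  have hq : (-1:ℝ) < ((2*k+1 : ℕ) : ℝ) := lt_of_lt_of_le (by norm_num) (Nat.cast_nonneg _)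
  have hI : (∫ r in Ioi (0:ℝ), r^(2*k+1) * Real.exp (-b * r^2))
      = ∫ r in Ioi (0:ℝ), r ^ (((2*k+1 : ℕ)) : ℝ) * Real.exp (-b * r ^ (2:ℝ)) := by
    refine setIntegral_congr_fun measurableSet_Ioi (fun r hr => ?_)
    rw [Real.rpow_natCast, Real.rpow_two]
  rw [hI, integral_rpow_mul_exp_neg_mul_rpow two_pos hq hb]
  have e1 : -(((2*k+1 : ℕ) : ℝ) + 1) / 2 = -(((k+1 : ℕ)) : ℝ) := by push_cast; ring
  have e2 : (((2*k+1 : ℕ) : ℝ) + 1) / 2 = ((k+1 : ℕ) : ℝ) := by push_cast; ring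
  rw [e1, e2, Real.rpow_neg hb.le, Real.rpow_natCast, Nat.cast_add, Nat.cast_one, Real.Gamma_nat_eq_factorial]
  rw [eq_div_iff (by positivity)]
  field_simp

/-- The auxiliary alternating sum. -/
def Tc (s b : ℕ) : ℤ :=
  ∑ k ∈ range (s+1), (-1)^k * ((s+b).choose (s-k) : ℤ) * ((b+k).choose k : ℤ)

lemma Tc_zero (s : ℕ) : Tc s 0 = if s = 0 then 1 else 0 := by
  unfold Tc
  have h : ∀ k ∈ range (s+1), (-1:ℤ)^k * ((s+0).choose (s-k) : ℤ) * ((0+k).choose k : ℤ)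
      = (-1)^k * (s.choose k : ℤ) := by
    intro k hk
    rw [Finset.mem_range] at hk
    rw [Nat.add_zero, Nat.zero_add, Nat.choose_self, Nat.choose_symm (by omega)]
    ring
  rw [Finset.sum_congr rfl h]
  rcases Nat.eq_zero_or_pos s with hs | hs
  · subst hs; simp
  · rw [if_neg (by omega)]
    simpa using Int.alternating_sum_range_choose_of_ne (by omega : s ≠ 0)

lemma Tc_step (s b : ℕ) : Tc (s+1) (b+1) = Tc (s+1) b := by
  have hTs : Tc s (b+1)
      = ∑ k ∈ range (s+1), (-1:ℤ)^k * ((s+b+1).choose (s-k) : ℤ) * ((b+1+k).choose k : ℤ) := by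
    unfold Tc
    refine Finset.sum_congr rfl fun k hk => ?_
    rw [show s+(b+1) = s+b+1 by omega]
  have hA' : (∑ k ∈ range (s+2), (-1:ℤ)^k * ((s+b+1).choose (s+1-k) : ℤ) * ((b+1+k).choose k : ℤ))
      = Tc (s+1) b - Tc s (b+1) := by
    rw [Finset.sum_range_succ' _ (s+1)]
    have h1 : ∀ k ∈ range (s+1),
        (-1:ℤ)^(k+1) * ((s+b+1).choose (s+1-(k+1)) : ℤ) * ((b+1+(k+1)).choose (k+1) : ℤ)
        = -((-1)^k * ((s+b+1).choose (s-k) : ℤ) * ((b+1+k).choose k : ℤ))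
          - (-1)^k * ((s+b+1).choose (s-k) : ℤ) * ((b+1+k).choose (k+1) : ℤ) := by
      intro k hk
      have e1 : s+1-(k+1) = s-k := by omega
      have e2 : b+1+(k+1) = (b+1+k)+1 := by ring
      rw [e1, e2, Nat.choose_succ_succ' (b+1+k) k]
      push_cast
      ring
    rw [Finset.sum_congr rfl h1, Finset.sum_sub_distrib, Finset.sum_neg_distrib]
    have hTb : Tc (s+1) b
        = ((s+b+1).choose (s+1) : ℤ)
          - ∑ k ∈ range (s+1), (-1:ℤ)^k * ((s+b+1).choose (s-k) : ℤ) * ((b+1+k).choose (k+1) : ℤ) := by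
      unfold Tc
      rw [Finset.sum_range_succ' _ (s+1)]
      have h2 : ∀ k ∈ range (s+1),
          (-1:ℤ)^(k+1) * ((s+1+b).choose (s+1-(k+1)) : ℤ) * ((b+(k+1)).choose (k+1) : ℤ)
          = -((-1)^k * ((s+b+1).choose (s-k) : ℤ) * ((b+1+k).choose (k+1) : ℤ)) := by
        intro k hk
        have e1 : s+1-(k+1) = s-k := by omega
        have e2 : b+(k+1) = b+1+k := by ring
        have e3 : s+1+b = s+b+1 := by ring
        rw [e1, e2, e3]; ring
      rw [Finset.sum_congr rfl h2, Finset.sum_neg_distrib]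
      rw [show s+1+b = s+b+1 by omega]
      simp only [Nat.sub_zero, Nat.add_zero, Nat.choose_zero_right, Nat.cast_one]
      push_cast
      ring
    rw [← hTs, hTb]
    simp only [Nat.sub_zero, Nat.add_zero, Nat.choose_zero_right, Nat.cast_one]
    push_cast
    ring
  -- now the main split
  have expand : Tc (s+1) (b+1)
      = (∑ k ∈ range (s+1), (-1:ℤ)^k * ((s+b+1).choose (s-k) : ℤ) * ((b+1+k).choose k : ℤ))
        + ∑ k ∈ range (s+2), (-1:ℤ)^k * ((s+b+1).choose (s+1-k) : ℤ) * ((b+1+k).choose k : ℤ) := by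
    unfold Tc
    rw [Finset.sum_range_succ _ (s+1), Finset.sum_range_succ _ (s+1)]
    have h3 : ∀ k ∈ range (s+1),
        (-1:ℤ)^k * ((s+1+(b+1)).choose (s+1-k) : ℤ) * ((b+1+k).choose k : ℤ)
        = (-1)^k * ((s+b+1).choose (s-k) : ℤ) * ((b+1+k).choose k : ℤ)
          + (-1)^k * ((s+b+1).choose (s+1-k) : ℤ) * ((b+1+k).choose k : ℤ) := by
      intro k hk
      rw [Finset.mem_range] at hk
      have e1 : s+1+(b+1) = (s+b+1)+1 := by ring
      have e2 : s+1-k = (s-k)+1 := by omega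
      rw [e1, e2, Nat.choose_succ_succ' (s+b+1) (s-k), ← e2]
      push_cast
      ring
    rw [Finset.sum_congr rfl h3, Finset.sum_add_distrib]
    simp only [Nat.sub_self, Nat.choose_zero_right, Nat.cast_one]
    ring
  rw [expand, hA', ← hTs]
  ring

lemma Tc_eq_zero (s b : ℕ) (hs : 1 ≤ s) : Tc s b = 0 := by
  obtain ⟨s, rfl⟩ : ∃ t, s = t + 1 := ⟨s - 1, by omega⟩
  induction b with
  | zero => rw [Tc_zero]; simp
  | succ b ih => rw [Tc_step]; exact ih

lemma Tc_zero_left (b : ℕ) : Tc 0 b = 1 := by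
  unfold Tc; simp

lemma comb_main (m' l : ℕ) :
    ∑ j ∈ range (l+1), (-2:ℤ)^j * ((l+m').choose (l-j) : ℤ) * ((m'+j).choose j : ℤ)
      = (-1)^l * ((l+m').choose l : ℤ) := by
  have step1 : ∀ j ∈ range (l+1),
      (-2:ℤ)^j * ((l+m').choose (l-j) : ℤ) * ((m'+j).choose j : ℤ)
      = ∑ i ∈ range (l+1),
          (-1:ℤ)^j * (j.choose i : ℤ) * ((l+m').choose (l-j) : ℤ) * ((m'+j).choose j : ℤ) := by
    intro j hj
    rw [Finset.mem_range] at hj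
    rw [← Finset.sum_mul, ← Finset.sum_mul]
    have h2 : (∑ i ∈ range (l+1), (-1:ℤ)^j * (j.choose i : ℤ)) = (-2)^j := by
      rw [← Finset.mul_sum]
      have : (∑ i ∈ range (l+1), (j.choose i : ℤ)) = 2^j := by
        rw [← Finset.sum_subset (Finset.range_subset_range.2 (by omega : j+1 ≤ l+1))
          (fun i _ hi => by
            rw [Finset.mem_range, not_lt] at hi
            simp [Nat.choose_eq_zero_of_lt (show j < i by omega)])]
        exact_mod_cast congrArg (Nat.cast (R := ℤ)) (Nat.sum_range_choose j)
      rw [this]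
      rw [show ((-2:ℤ))^j = (-1)^j * 2^j by rw [← neg_one_mul, mul_pow]]
    rw [h2]
  rw [Finset.sum_congr rfl step1, Finset.sum_comm]
  have step2 : ∀ i ∈ range (l+1),
      (∑ j ∈ range (l+1),
          (-1:ℤ)^j * (j.choose i : ℤ) * ((l+m').choose (l-j) : ℤ) * ((m'+j).choose j : ℤ))
      = (-1)^i * ((m'+i).choose i : ℤ) * Tc (l-i) (m'+i) := by
    intro i hi
    rw [Finset.mem_range] at hi
    have hsub : (∑ j ∈ range (l+1),
        (-1:ℤ)^j * (j.choose i : ℤ) * ((l+m').choose (l-j) : ℤ) * ((m'+j).choose j : ℤ))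
        = ∑ j ∈ Finset.Ico i (l+1),
          (-1:ℤ)^j * (j.choose i : ℤ) * ((l+m').choose (l-j) : ℤ) * ((m'+j).choose j : ℤ) := by
      refine (Finset.sum_subset (fun x hx => by
          rw [Finset.mem_Ico] at hx; rw [Finset.mem_range]; omega) (fun j hj hj' => ?_)).symm
      have : j < i := by
        rw [Finset.mem_range] at hj; rw [Finset.mem_Ico, not_and_or] at hj'; omega
      rw [Nat.choose_eq_zero_of_lt this]
      push_cast; ring
    rw [hsub, Finset.sum_Ico_eq_sum_range]
    rw [show l+1-i = (l-i)+1 by omega]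
    unfold Tc
    rw [Finset.mul_sum]
    refine Finset.sum_congr rfl fun k hk => ?_
    rw [Finset.mem_range] at hk
    -- key choose identity
    have key : ((m'+(i+k)).choose (i+k)) * ((i+k).choose i)
        = ((m'+i).choose i) * ((m'+i+k).choose k) := by
      have h1 : ((i+k).choose i) = ((i+k).choose k) := Nat.choose_symm_add
      rw [h1]
      have := Nat.choose_mul (n := m'+i+k) (show k ≤ i+k by omega)
      rw [show m'+(i+k) = m'+i+k by omega, this, show i+k-k = i by omega,
        show m'+i+k-k = m'+i by omega]
      ring
    have e1 : l-(i+k) = (l-i)-k := by omega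
    have e2 : l+m' = (l-i)+(m'+i) := by omega
    rw [e1, e2] at *
    have : ((-1:ℤ))^(i+k) = (-1)^i * (-1)^k := by rw [pow_add]
    calc (-1:ℤ)^(i+k) * ((i+k).choose i : ℤ) * (((l-i)+(m'+i)).choose ((l-i)-k) : ℤ)
          * ((m'+(i+k)).choose (i+k) : ℤ)
        = (-1:ℤ)^(i+k) * (((l-i)+(m'+i)).choose ((l-i)-k) : ℤ)
          * ((((m'+(i+k)).choose (i+k)) * ((i+k).choose i) : ℕ) : ℤ) := by push_cast; ring
      _ = (-1:ℤ)^(i+k) * (((l-i)+(m'+i)).choose ((l-i)-k) : ℤ)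
          * ((((m'+i).choose i) * ((m'+i+k).choose k) : ℕ) : ℤ) := by rw [key]
      _ = (-1:ℤ)^i * ((m'+i).choose i : ℤ)
          * ((-1)^k * (((l-i)+(m'+i)).choose ((l-i)-k) : ℤ) * (((m'+i)+k).choose k : ℤ)) := by
          rw [this]; push_cast; ring
  rw [Finset.sum_congr rfl step2]
  rw [Finset.sum_eq_single_of_mem l (by rw [Finset.mem_range]; omega) (fun i hi hne => by
    rw [Tc_eq_zero (l-i) (m'+i) (by rw [Finset.mem_range] at hi; omega), mul_zero])]
  rw [Nat.sub_self, Tc_zero_left, mul_one, show m'+l = l+m' by omega]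

/-- The generalized Laguerre polynomial of degree `l` and order `α`:
`L_l^α(x) = Σ_{j=0}^{l} binom(l+α, l−j) (−x)^j / j!`. -/
noncomputable def laguerre (l α : ℕ) (x : ℝ) : ℝ :=
  ∑ j ∈ Finset.range (l + 1),
    (Nat.choose (l + α) (l - j) : ℝ) * (-x) ^ j / (j.factorial : ℝ)

/-- For `m ≥ 1`, `l ∈ ℕ` and `ν > 0`,
`∫_{ℝ^{2m}} e^{−ν‖X‖²/4} L_l^{m−1}(ν‖X‖²/2) dX = (−1)^l (4π/ν)^m binom(l+m−1, l)`. -/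
theorem integral_gaussian_mul_laguerre
    (m l : ℕ) (hm : 1 ≤ m) (ν : ℝ) (hν : 0 < ν) :
    (∫ X : EuclideanSpace ℝ (Fin (2 * m)),
        Real.exp (-ν * ‖X‖ ^ 2 / 4) * laguerre l (m - 1) (ν * ‖X‖ ^ 2 / 2)) =
      (-1 : ℝ) ^ l * (4 * Real.pi / ν) ^ m * (Nat.choose (l + m - 1) l : ℝ) := by
  haveI : Nontrivial (EuclideanSpace ℝ (Fin (2*m))) := by
    apply Module.nontrivial_of_finrank_pos (R := ℝ) (M := EuclideanSpace ℝ (Fin (2*m)))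
    rw [finrank_euclideanSpace_fin]; omega
  haveI : Nonempty (Fin (2*m)) := ⟨⟨0, by omega⟩⟩
  have hb : (0:ℝ) < ν/4 := by positivity
  have h : (∫ X : EuclideanSpace ℝ (Fin (2 * m)),
        Real.exp (-ν * ‖X‖ ^ 2 / 4) * laguerre l (m - 1) (ν * ‖X‖ ^ 2 / 2))
      = (2*m) • ((volume : Measure (EuclideanSpace ℝ (Fin (2*m)))) (Metric.ball 0 1)).toReal
          • ∫ r in Ioi (0:ℝ),
              r ^ (2*m-1) • (Real.exp (-ν * r ^ 2 / 4) * laguerre l (m - 1) (ν * r ^ 2 / 2)) := by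
    have := MeasureTheory.integral_fun_norm_addHaar
      (volume : Measure (EuclideanSpace ℝ (Fin (2*m))))
      (fun r => Real.exp (-ν * r ^ 2 / 4) * laguerre l (m - 1) (ν * r ^ 2 / 2))
    rw [finrank_euclideanSpace_fin] at this
    exact this
  rw [h]
  -- volume of unit ball
  have hball : ((volume : Measure (EuclideanSpace ℝ (Fin (2*m)))) (Metric.ball 0 1)).toReal
      = Real.pi ^ m / (m.factorial : ℝ) := by
    rw [EuclideanSpace.volume_ball]
    rw [Fintype.card_fin]
    simp only [ENNReal.ofReal_one, one_pow, one_mul]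
    rw [ENNReal.toReal_ofReal (by positivity)]
    congr 1
    · rw [show 2*m = m*2 by ring, pow_mul', Real.sq_sqrt Real.pi_nonneg]
    · rw [show ((2*m:ℕ):ℝ)/2 = ((m:ℕ):ℝ) by push_cast; ring, Real.Gamma_nat_eq_factorial]
  -- expand the integrand as a finite sum
  have expand : (fun r : ℝ =>
        r ^ (2*m-1) • (Real.exp (-ν * r ^ 2 / 4) * laguerre l (m - 1) (ν * r ^ 2 / 2)))
      = fun r : ℝ => ∑ j ∈ Finset.range (l+1),
          ((l+(m-1)).choose (l-j) : ℝ) * (-(ν/2))^j / (j.factorial : ℝ)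
            * (r ^ (2*(m-1+j)+1) * Real.exp (-(ν/4) * r^2)) := by
    funext r
    unfold laguerre
    rw [smul_eq_mul, Finset.mul_sum, Finset.mul_sum]
    refine Finset.sum_congr rfl fun j hj => ?_
    rw [show -(ν * r^2 / 2) = (-(ν/2)) * r^2 by ring, mul_pow, ← pow_mul,
      show -ν * r^2 / 4 = -(ν/4) * r^2 by ring]
    rw [show 2*(m-1+j)+1 = (2*m-1) + 2*j by omega, pow_add,
      show 2*j = j*2 by ring]
    ring
  rw [expand]
  -- swap sum and integral
  have hint : ∀ j ∈ Finset.range (l+1), IntegrableOn (fun r : ℝ =>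
      ((l+(m-1)).choose (l-j) : ℝ) * (-(ν/2))^j / (j.factorial : ℝ)
        * (r ^ (2*(m-1+j)+1) * Real.exp (-(ν/4) * r^2))) (Ioi 0) := by
    intro j hj
    apply Integrable.const_mul
    have := integrableOn_rpow_mul_exp_neg_mul_sq hb
      (s := ((2*(m-1+j)+1 : ℕ) : ℝ)) (lt_of_lt_of_le (by norm_num) (Nat.cast_nonneg _))
    refine this.congr_fun (fun r hr => ?_) measurableSet_Ioi
    simp only [Real.rpow_natCast]
  rw [MeasureTheory.integral_finset_sum _ hint]
  have heval : ∀ j ∈ Finset.range (l+1),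
      (∫ r in Ioi (0:ℝ), ((l+(m-1)).choose (l-j) : ℝ) * (-(ν/2))^j / (j.factorial : ℝ)
        * (r ^ (2*(m-1+j)+1) * Real.exp (-(ν/4) * r^2)))
      = ((m-1).factorial : ℝ) / (2 * (ν/4)^m)
          * ((-2:ℝ)^j * ((l+(m-1)).choose (l-j) : ℝ) * (((m-1)+j).choose j : ℝ)) := by
    intro j hj
    rw [integral_const_mul, oneD_integral _ hb]
    have hfac : ((m-1+j).factorial : ℝ)
        = (((m-1)+j).choose j : ℝ) * (j.factorial : ℝ) * ((m-1).factorial : ℝ) := by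
      have := Nat.choose_mul_factorial_mul_factorial (show j ≤ (m-1)+j by omega)
      rw [show (m-1)+j-j = m-1 by omega] at this
      exact_mod_cast congrArg (Nat.cast (R := ℝ)) this.symm
    rw [show m-1+j+1 = m+j by omega, hfac]
    rw [show (-(ν/2)) = (-2) * (ν/4) by ring, mul_pow, pow_add]
    have h1 : ((ν:ℝ)/4)^j ≠ 0 := by positivity
    have h2 : ((ν:ℝ)/4)^m ≠ 0 := by positivity
    have h3 : ((j.factorial : ℝ)) ≠ 0 := by positivity
    field_simp
  rw [Finset.sum_congr rfl heval, ← Finset.mul_sum]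
  -- the combinatorial identity
  have hcomb : (∑ j ∈ Finset.range (l+1),
        (-2:ℝ)^j * ((l+(m-1)).choose (l-j) : ℝ) * (((m-1)+j).choose j : ℝ))
      = (-1)^l * ((l+(m-1)).choose l : ℝ) := by
    have := comb_main (m-1) l
    have := congrArg (fun z : ℤ => (z : ℝ)) this
    push_cast at this
    convert this using 2
  rw [hcomb, hball]
  rw [show l + m - 1 = l + (m-1) by omega]
  have hfacm : (m.factorial : ℝ) = m * ((m-1).factorial : ℝ) := by
    rw [show m = (m-1)+1 by omega, Nat.factorial_succ]
    push_cast; ring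
  rw [nsmul_eq_mul, smul_eq_mul, hfacm]
  have h4 : ((ν:ℝ)/4)^m ≠ 0 := by positivity
  have h5 : ((m-1).factorial : ℝ) ≠ 0 := by positivity
  have h6 : (m:ℝ) ≠ 0 := by positivity
  have h7 : (4*Real.pi/ν)^m = Real.pi^m / (ν/4)^m := by
    rw [show 4*Real.pi/ν = Real.pi/(ν/4) by
      rw [div_eq_div_iff hν.ne' (by positivity)]; ring, div_pow]
  rw [h7]
  field_simp
  push_cast
  ring
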